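/- Let B be a Boolean algebra and S(B) its Stone space. Suppose X is a subset of B and c ∈ B is the supremum of X (i.e., IsLUB X c). Then the set N_c \ ⋃_{x ∈ X} N_x is nowhere dense in S(B) (its closure has empty interior). In particular, if c = ⊤, the set S(B) \ ⋃_{x ∈ X} N_x is nowhere dense. -/

import Mathlib

/-- A Boolean algebra homomorphism into the two-element Boolean algebra `Bool`. -/
def IsBoolHom {B : Type*} [BooleanAlgebra B] (h : B → Bool) : Prop :=
  h ⊤ = true ∧ h ⊥ = false ∧ (∀ a b : B, h (a ⊓ b) = (h a && h b)) ∧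
  (∀ a b : B, h (a ⊔ b) = (h a || h b)) ∧ (∀ a : B, h aᶜ = !h a)

/-- The Stone space of a Boolean algebra: Boolean homomorphisms `B → Bool`,
topologized as a subspace of the product `Bool ^ B` (with `Bool` discrete). -/
abbrev StoneSpace (B : Type*) [BooleanAlgebra B] : Type _ := {h : B → Bool // IsBoolHom h}

/-- The basic clopen set `N_b = {h ∈ S(B) : h b = true}`. -/
def StoneN {B : Type*} [BooleanAlgebra B] (b : B) : Set (StoneSpace B) :=
  {h : StoneSpace B | h.1 b = true}

open Classical in
/-- Stone / BPI: every nonzero element is true under some Bool-valued hom. -/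
lemma exists_hom_true {B : Type*} [BooleanAlgebra B] {a : B} (ha : a ≠ ⊥) :
    ∃ g : StoneSpace B, g.1 a = true := by
  obtain ⟨J, Jprime, -, hdisj⟩ :=
    DistribLattice.prime_ideal_of_disjoint_filter_ideal
      (F := Order.PFilter.principal a) (I := Order.Ideal.principal ⊥)
      (by
        rw [Set.disjoint_left]
        intro x hx hx'
        have h1 : a ≤ x := hx
        have h2 : x ≤ ⊥ := hx'
        exact ha (le_bot_iff.1 (h1.trans h2)))
  have haJ : a ∉ J := Set.disjoint_left.1 hdisj (Order.PFilter.mem_principal.2 le_rfl)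
  have hproper : Order.Ideal.IsProper J := Jprime.toIsProper
  -- membership characterizations
  have hmem_inf : ∀ x y : B, x ⊓ y ∈ J ↔ x ∈ J ∨ y ∈ J := by
    intro x y
    constructor
    · exact Jprime.mem_or_mem
    · rintro (hx | hy)
      · exact J.lower inf_le_left hx
      · exact J.lower inf_le_right hy
  have hmem_sup : ∀ x y : B, x ⊔ y ∈ J ↔ x ∈ J ∧ y ∈ J := by
    intro x y
    constructor
    · intro hxy
      exact ⟨J.lower le_sup_left hxy, J.lower le_sup_right hxy⟩
    · rintro ⟨hx, hy⟩; exact J.sup_mem hx hy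
  have hmem_compl : ∀ x : B, xᶜ ∈ J ↔ x ∉ J := by
    intro x
    constructor
    · intro hxc hx
      exact hproper.top_notMem (by simpa [sup_compl_eq_top] using J.sup_mem hx hxc)
    · intro hx
      exact (Jprime.mem_or_compl_mem).resolve_left hx
  refine ⟨⟨fun x => decide (x ∉ J), ?_, ?_, ?_, ?_, ?_⟩, by simp [haJ]⟩
  · simp [hproper.top_notMem]
  · simp [J.bot_mem]
  · intro x y
    simp only [hmem_inf, decide_eq_true_eq]
    by_cases hx : x ∈ J <;> by_cases hy : y ∈ J <;> simp [hx, hy]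
  · intro x y
    simp only [hmem_sup, decide_eq_true_eq]
    by_cases hx : x ∈ J <;> by_cases hy : y ∈ J <;> simp [hx, hy]
  · intro x
    simp only [hmem_compl]
    by_cases hx : x ∈ J <;> simp [hx]

lemma hom_mono {B : Type*} [BooleanAlgebra B] (g : StoneSpace B) {x y : B}
    (hxy : x ≤ y) (hx : g.1 x = true) : g.1 y = true := by
  have : g.1 (x ⊓ y) = (g.1 x && g.1 y) := g.2.2.2.1 x y
  rw [inf_eq_left.2 hxy, hx] at this
  simpa using this.symm

lemma hom_finset_inf {B : Type*} [BooleanAlgebra B] (g : StoneSpace B)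
    (s : Finset B) (f : B → B) :
    g.1 (s.inf f) = true ↔ ∀ i ∈ s, g.1 (f i) = true := by
  classical
  induction s using Finset.induction with
  | empty => simp [g.2.1]
  | insert _ _ hnotmem ih =>
    rw [Finset.inf_insert]
    rw [g.2.2.2.1]
    simp [ih]

lemma isClopen_stoneN {B : Type*} [BooleanAlgebra B] (b : B) : IsClopen (StoneN b) := by
  have : StoneN b = (fun g : StoneSpace B => g.1 b) ⁻¹' {true} := rfl
  rw [this]
  exact (isClopen_discrete {true}).preimage
    ((continuous_apply b).comp continuous_subtype_val)

/-- If `c = sup X` in a Boolean algebra `B`, then `N_c \ ⋃_{x ∈ X} N_x` is nowhere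
dense in the Stone space of `B`; in particular if `c = ⊤` then
`S(B) \ ⋃_{x ∈ X} N_x` is nowhere dense. -/
theorem nowhereDense_of_isLUB {B : Type*} [BooleanAlgebra B] (X : Set B) (c : B)
    (hc : IsLUB X c) :
    IsNowhereDense (StoneN c \ ⋃ x ∈ X, StoneN x) ∧
    (c = ⊤ →
      IsNowhereDense ((Set.univ : Set (StoneSpace B)) \ ⋃ x ∈ X, StoneN x)) := by
  classical
  set T : Set (StoneSpace B) := StoneN c \ ⋃ x ∈ X, StoneN x with hT
  have hTclosed : IsClosed T := by
    apply (isClopen_stoneN c).isClosed.sdiff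
    exact isOpen_biUnion fun x _ => (isClopen_stoneN x).isOpen
  have hmain : IsNowhereDense T := by
    rw [IsNowhereDense, hTclosed.closure_eq]
    rw [Set.eq_empty_iff_forall_notMem]
    intro h hh
    -- extract a basic open neighborhood of h inside T
    obtain ⟨t, htopen, htpre⟩ := isOpen_induced_iff.1 (isOpen_interior (s := T))
    have hht : h.1 ∈ t := by
      rw [← htpre] at hh; exact hh
    obtain ⟨I, u, hu, hsub⟩ := isOpen_pi_iff.1 htopen h.1 hht
    -- agreement on I implies membership in T
    have hagree : ∀ g : StoneSpace B, (∀ i ∈ I, g.1 i = h.1 i) → g ∈ T := by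
      intro g hg
      have : g.1 ∈ (I : Set B).pi u := by
        intro i hi
        rw [hg i hi]
        exact (hu i hi).2
      have : g ∈ Subtype.val ⁻¹' t := hsub this
      rw [htpre] at this
      exact interior_subset this
    -- the basic element b
    set f : B → B := fun i => if h.1 i = true then i else iᶜ with hf
    set b : B := I.inf f with hb
    have hhb : h.1 b = true := by
      rw [hb, hom_finset_inf]
      intro i _
      by_cases hi : h.1 i = true
      · simp [hf, hi]
      · have hfalse : h.1 i = false := Bool.eq_false_iff.2 hi
        simp [hf, hfalse, h.2.2.2.2.2 i]
    have hNb : ∀ g : StoneSpace B, g.1 b = true → g ∈ T := by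
      intro g hg
      apply hagree
      intro i hi
      have hgi : g.1 (f i) = true := (hom_finset_inf g I f).1 hg i hi
      by_cases hhi : h.1 i = true
      · rw [hhi]; simpa [hf, hhi] using hgi
      · have hgc : g.1 iᶜ = true := by
          have hfalse : h.1 i = false := Bool.eq_false_iff.2 hhi
          simpa [hf, hfalse] using hgi
        have hgfalse : g.1 i = false := by
          rw [g.2.2.2.2.2 i] at hgc
          simpa using hgc
        rw [hgfalse]
        exact (Bool.eq_false_iff.2 hhi).symm
    -- every x in X is disjoint from b
    have hdisj : ∀ x ∈ X, b ⊓ x = ⊥ := by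
      intro x hx
      by_contra hne
      obtain ⟨g, hg⟩ := exists_hom_true hne
      have hgb : g.1 b = true := hom_mono g inf_le_left hg
      have hgx : g.1 x = true := hom_mono g inf_le_right hg
      have : g ∈ T := hNb g hgb
      exact this.2 (Set.mem_biUnion hx hgx)
    -- so c ≤ bᶜ
    have hcb : c ≤ bᶜ := by
      apply hc.2
      intro x hx
      exact le_compl_iff_disjoint_left.2 (disjoint_iff.2 (hdisj x hx))
    have hhc : h.1 c = true := (interior_subset hh).1
    have : h.1 bᶜ = true := hom_mono h hcb hhc
    rw [h.2.2.2.2.2 b, hhb] at this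
    simp at this
  refine ⟨hmain, fun hctop => ?_⟩
  have : StoneN c = (Set.univ : Set (StoneSpace B)) := by
    rw [hctop]
    ext g
    simp [StoneN, g.2.1]
  rw [← this]
  exact hmain
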